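/- A lattice having no infinite chains is a complete lattice. -/

import Mathlib

private lemma chain_of_comp {L : Type*} [Preorder L] (f : ℕ → L)
    (hf : ∀ m n, m < n → f m ≤ f n ∨ f n ≤ f m) : IsChain (· ≤ ·) (Set.range f) := by
  rintro _ ⟨m, rfl⟩ _ ⟨n, rfl⟩ hne
  rcases lt_trichotomy m n with h | h | h
  · exact hf m n h
  · exact absurd (congrArg f h) hne
  · exact (hf n m h).symm

private lemma wf_gt_of_finChains {L : Type*} [Lattice L]
    (hfin : ∀ C : Set L, IsChain (· ≤ ·) C → C.Finite) :
    WellFounded ((· > ·) : L → L → Prop) := by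
  rw [RelEmbedding.wellFounded_iff_isEmpty]
  constructor
  intro f
  have hchain : IsChain (· ≤ ·) (Set.range f) := by
    apply chain_of_comp
    intro m n h
    exact Or.inl (f.map_rel_iff.2 h).le
  exact Set.infinite_range_of_injective f.injective (hfin _ hchain)

private lemma wf_lt_of_finChains {L : Type*} [Lattice L]
    (hfin : ∀ C : Set L, IsChain (· ≤ ·) C → C.Finite) :
    WellFounded ((· < ·) : L → L → Prop) := by
  rw [RelEmbedding.wellFounded_iff_isEmpty]
  constructor
  intro f
  -- f n descending w.r.t. < means f (n+1) < f n is false; here r = (· < ·),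
  -- so m > n → f m < f n? map_rel_iff : f a < f b ↔ a > b
  have hchain : IsChain (· ≤ ·) (Set.range fun n => f n) := by
    apply chain_of_comp
    intro m n h
    exact Or.inr (f.map_rel_iff.2 h).le
  exact Set.infinite_range_of_injective f.injective (hfin _ hchain)

/-- A lattice having no infinite chains is complete: every nonempty subset
has a supremum and an infimum. -/
theorem lattice_no_infinite_chains_complete
    {L : Type*} [Lattice L]
    (hfin : ∀ C : Set L, IsChain (· ≤ ·) C → C.Finite) :
    ∀ A : Set L, A.Nonempty → (∃ a, IsLUB A a) ∧ (∃ b, IsGLB A b) := by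
  classical
  intro A ⟨a0, ha0⟩
  constructor
  · -- LUB via maximal element of finite sups
    set S : Set L := {x | ∃ t : Finset L, ∃ h : t.Nonempty, ↑t ⊆ A ∧ t.sup' h id = x}
      with hS
    have hSne : S.Nonempty := ⟨a0, {a0}, Finset.singleton_nonempty a0,
      by simpa using ha0, by simp⟩
    obtain ⟨m, hmS, hmax⟩ := (wf_gt_of_finChains hfin).has_min S hSne
    obtain ⟨t, ht, htA, htm⟩ := hmS
    refine ⟨m, ?_, ?_⟩
    · intro a ha
      have hmem : a ⊔ m ∈ S := by
        refine ⟨insert a t, Finset.insert_nonempty a t, ?_, ?_⟩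
        · intro x hx
          rcases Finset.mem_insert.1 hx with rfl | hx
          · exact ha
          · exact htA hx
        · rw [Finset.sup'_insert, htm]; rfl; exact ht
      have hle : m ≤ a ⊔ m := le_sup_right
      have : ¬ m < a ⊔ m := hmax _ hmem
      have heq : a ⊔ m = m := (hle.lt_or_eq.resolve_left this).symm
      calc a ≤ a ⊔ m := le_sup_left
        _ = m := heq
    · intro u hu
      rw [← htm]
      exact Finset.sup'_le _ _ fun x hx => hu (htA hx)
  · set S : Set L := {x | ∃ t : Finset L, ∃ h : t.Nonempty, ↑t ⊆ A ∧ t.inf' h id = x}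
      with hS
    have hSne : S.Nonempty := ⟨a0, {a0}, Finset.singleton_nonempty a0,
      by simpa using ha0, by simp⟩
    obtain ⟨m, hmS, hmin⟩ := (wf_lt_of_finChains hfin).has_min S hSne
    obtain ⟨t, ht, htA, htm⟩ := hmS
    refine ⟨m, ?_, ?_⟩
    · intro a ha
      have hmem : a ⊓ m ∈ S := by
        refine ⟨insert a t, Finset.insert_nonempty a t, ?_, ?_⟩
        · intro x hx
          rcases Finset.mem_insert.1 hx with rfl | hx
          · exact ha
          · exact htA hx
        · rw [Finset.inf'_insert, htm]; rfl; exact ht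
      have hle : a ⊓ m ≤ m := inf_le_right
      have : ¬ a ⊓ m < m := hmin _ hmem
      have heq : a ⊓ m = m := hle.lt_or_eq.resolve_left this
      calc m = a ⊓ m := heq.symm
        _ ≤ a := inf_le_left
    · intro u hu
      rw [← htm]
      exact Finset.le_inf' _ _ fun x hx => hu (htA hx)
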